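/- Let p be a prime, k a field of characteristic p, n ≥ 1, and R := k[X_0, …, X_{n−1}]/(X_0^p, …, X_{n−1}^p) with x_i the image of X_i. For each 0 ≤ j < p^n with p-adic expansion j = Σ_ν j_ν p^ν set x^{[j]} := Π_ν x_ν^{j_ν}/j_ν!, and define the k-derivation δ := Σ_{i=0}^{n−1} x^{[p^i−1]} ∂/∂x_i of R, where x^{[p^i−1]} = Π_{ν=0}^{i−1} x_ν^{p−1}/(p−1)! and x^{[0]} := 1. Then δ is a simple derivation of R (the only ideals I of R with δ(I) ⊆ I are 0 and R), δ is nilpotent with δ^{p^n} = 0, and δ^{p^i}(x^{[p^i]}) = 1 for each 0 ≤ i ≤ n−1; in particular δ ∈ nsder(R). -/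

import Mathlib

/-- A derivation of a ring: an additive map satisfying the Leibniz rule. -/
def IsDerivation {R : Type*} [Ring R] (δ : R → R) : Prop :=
  (∀ a b : R, δ (a + b) = δ a + δ b) ∧ (∀ a b : R, δ (a * b) = δ a * b + a * δ b)

/-- `δ ∈ nsder(R)` (relative to the maximal ideal `m`): `δ` is a nilpotent simple
derivation such that whenever `δ^{p^i} ≠ 0` there is `y ∈ m` with `δ^{p^i}(y) = 1`. -/
def Nsder (p : ℕ) {R : Type*} [CommRing R] (m : Ideal R) (δ : R → R) : Prop :=
  IsDerivation δ ∧ (∃ N : ℕ, ∀ r : R, δ^[N] r = 0) ∧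
  (∀ I : Ideal R, (∀ a ∈ I, δ a ∈ I) → I = ⊥ ∨ I = ⊤) ∧
  ∀ i : ℕ, (∃ r : R, δ^[p ^ i] r ≠ 0) → ∃ y ∈ m, δ^[p ^ i] y = 1

/-- The truncated polynomial ring `k[X_0,…,X_{n−1}]/(X_0^p,…,X_{n−1}^p)`. -/
abbrev TruncPoly (p n : ℕ) (k : Type*) [CommRing k] :=
  MvPolynomial (Fin n) k ⧸
    Ideal.span (Set.range fun i : Fin n => (MvPolynomial.X i : MvPolynomial (Fin n) k) ^ p)


section NatDigits
variable {p : ℕ}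

lemma sumDig_lt (hp : 2 ≤ p) (N : ℕ) (f : ℕ → ℕ) (hf : ∀ ν, f ν < p) :
    (∑ ν ∈ Finset.range N, f ν * p ^ ν) < p ^ N := by
  induction N with
  | zero => simp
  | succ N ih =>
    rw [Finset.sum_range_succ, pow_succ]
    have h2 : f N + 1 ≤ p := hf N
    have h3 : (f N + 1) * p ^ N ≤ p ^ N * p := by
      rw [mul_comm (p ^ N) p]; exact Nat.mul_le_mul_right _ h2
    nlinarith
  
lemma dig_sum (hp : 2 ≤ p) (N : ℕ) (f : ℕ → ℕ) (hf : ∀ ν, f ν < p) (μ : ℕ) :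
    (∑ ν ∈ Finset.range N, f ν * p ^ ν) / p ^ μ % p = if μ < N then f μ else 0 := by
  induction N generalizing f μ with
  | zero => simp
  | succ N ih =>
    have hsplit : (∑ ν ∈ Finset.range (N+1), f ν * p ^ ν)
        = f 0 + p * ∑ ν ∈ Finset.range N, f (ν+1) * p ^ ν := by
      rw [Finset.sum_range_succ' (fun ν => f ν * p ^ ν), Finset.mul_sum]
      simp only [pow_zero, mul_one, pow_succ]
      rw [add_comm]
      congr 1
      exact Finset.sum_congr rfl fun i _ => by ring
    rw [hsplit]
    cases μ with
    | zero =>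
      simp only [pow_zero, Nat.div_one, if_pos (Nat.succ_pos N)]
      rw [Nat.add_mul_mod_self_left]
      exact Nat.mod_eq_of_lt (hf 0)
    | succ μ =>
      have hp0 : 0 < p := by omega
      have h1 : (f 0 + p * ∑ ν ∈ Finset.range N, f (ν+1) * p ^ ν) / p ^ (μ+1)
          = (∑ ν ∈ Finset.range N, f (ν+1) * p ^ ν) / p ^ μ := by
        rw [pow_succ', ← Nat.div_div_eq_div_mul, Nat.add_mul_div_left _ _ hp0,
          Nat.div_eq_of_lt (hf 0), zero_add]
      rw [h1, ih (fun ν => f (ν+1)) (fun ν => hf (ν+1)) μ]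
      simp [Nat.succ_lt_succ_iff]
end NatDigits


section NatShift

lemma dig_lo {p i q ν : ℕ} (hp : 2 ≤ p) (hν : ν < i) : (p ^ i * q) / p ^ ν % p = 0 := by
  have h : p ^ i * q = p ^ ν * (p * (p ^ (i - ν - 1) * q)) := by
    rw [← mul_assoc, ← mul_assoc, ← pow_succ, ← pow_add]; congr 2; omega
  rw [h, Nat.mul_div_cancel_left _ (pow_pos (by omega) _), Nat.mul_mod_right]

lemma dig_at {p i q : ℕ} (hp : 2 ≤ p) : (p ^ i * q) / p ^ i % p = q % p := by
  rw [Nat.mul_div_cancel_left _ (pow_pos (by omega) _)]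

lemma predDiv {p i q ν : ℕ} (hp : 2 ≤ p) (hq : 1 ≤ q) (hν : ν ≤ i) :
    (p ^ i * q - 1) / p ^ ν = p ^ (i - ν) * q - 1 := by
  have hpν : 0 < p ^ ν := pow_pos (by omega) _
  have hfac : p ^ i * q = p ^ ν * (p ^ (i - ν) * q) := by
    rw [← mul_assoc, ← pow_add]; congr 2; omega
  have hpos : 1 ≤ p ^ (i - ν) * q := Nat.one_le_iff_ne_zero.2 (by positivity)
  have key : p ^ i * q - 1 = p ^ ν * (p ^ (i - ν) * q - 1) + (p ^ ν - 1) := by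
    rw [Nat.mul_sub, mul_one, hfac]
    have : p ^ ν ≤ p ^ ν * (p ^ (i - ν) * q) := Nat.le_mul_of_pos_right _ hpos
    omega
  rw [key, Nat.mul_add_div hpν, Nat.div_eq_of_lt (by omega), add_zero]

lemma dig_pred_lo {p i q ν : ℕ} (hp : 2 ≤ p) (hq : 1 ≤ q) (hν : ν < i) :
    (p ^ i * q - 1) / p ^ ν % p = p - 1 := by
  rw [predDiv hp hq hν.le]
  have h : p ^ (i - ν) * q = p * (p ^ (i - ν - 1) * q) := by
    rw [← mul_assoc, ← pow_succ']; congr 2; omega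
  rw [h]
  have hc : 1 ≤ p ^ (i - ν - 1) * q := Nat.one_le_iff_ne_zero.2 (by positivity)
  have h2 : p * (p ^ (i - ν - 1) * q) - 1 = p * (p ^ (i - ν - 1) * q - 1) + (p - 1) := by
    rw [Nat.mul_sub, mul_one]
    have : p ≤ p * (p ^ (i - ν - 1) * q) := Nat.le_mul_of_pos_right _ hc
    omega
  rw [h2, Nat.mul_add_mod, Nat.mod_eq_of_lt (by omega)]

lemma dig_pred_at {p i q : ℕ} (hp : 2 ≤ p) (hq : ¬ p ∣ q) :
    (p ^ i * q - 1) / p ^ i % p = q % p - 1 := by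
  have hq1 : 1 ≤ q := by
    rcases Nat.eq_zero_or_pos q with h | h
    · exact absurd (h ▸ dvd_zero p) hq
    · exact h
  rw [predDiv hp hq1 le_rfl, Nat.sub_self, pow_zero, one_mul]
  have hdm := Nat.div_add_mod q p
  have hr : 1 ≤ q % p := by
    rcases Nat.eq_zero_or_pos (q % p) with h | h
    · exact absurd (Nat.dvd_of_mod_eq_zero h) hq
    · exact h
  have hlt : q % p < p := Nat.mod_lt q (by omega)
  have h1 : q - 1 = (q % p - 1) + p * (q / p) := by omega
  rw [h1, Nat.add_mul_mod_self_left, Nat.mod_eq_of_lt (show q % p - 1 < p by omega)]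

lemma dig_pred_hi {p i q ν : ℕ} (hp : 2 ≤ p) (hq : ¬ p ∣ q) (hν : i < ν) :
    (p ^ i * q - 1) / p ^ ν = (p ^ i * q) / p ^ ν := by
  set j := p ^ i * q with hj
  have hpν : 0 < p ^ ν := pow_pos (by omega) _
  have hdm := Nat.div_add_mod j (p ^ ν)
  have hmlt : j % p ^ ν < p ^ ν := Nat.mod_lt _ hpν
  have hmod : 1 ≤ j % p ^ ν := by
    rcases Nat.eq_zero_or_pos (j % p ^ ν) with h | h
    · exfalso
      have hdvd : p ^ ν ∣ j := Nat.dvd_of_mod_eq_zero h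
      have h2 : p ^ (i+1) ∣ p ^ i * q := dvd_trans (pow_dvd_pow p (by omega)) hdvd
      rw [pow_succ] at h2
      exact hq ((Nat.mul_dvd_mul_iff_left (pow_pos (show 0<p by omega) i)).1 h2)
    · exact h
  have h1 : j - 1 = p ^ ν * (j / p ^ ν) + (j % p ^ ν - 1) := by omega
  rw [h1, Nat.mul_add_div hpν, Nat.div_eq_of_lt (show j % p ^ ν - 1 < p ^ ν by omega), add_zero]

end NatShift

set_option synthInstance.maxHeartbeats 1000000
set_option maxHeartbeats 1000000
noncomputable section Stmt17Aux
open MvPolynomial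

variable (p n : ℕ) (k : Type*) [Field k]

abbrev TP := MvPolynomial (Fin n) k ⧸
    Ideal.span (Set.range fun i : Fin n => (MvPolynomial.X i : MvPolynomial (Fin n) k) ^ p)

def mkQ : MvPolynomial (Fin n) k →ₐ[k] TP p n k := Ideal.Quotient.mkₐ k _

def xq (i : Fin n) : TP p n k := mkQ p n k (X i)

/-- `w m = (∏ (m ν)!⁻¹) • ∏ x_ν ^ m ν` -/
def w (m : Fin n → ℕ) : TP p n k :=
  algebraMap k (TP p n k) (∏ ν : Fin n, (((m ν).factorial : k))⁻¹) * ∏ ν : Fin n, xq p n k ν ^ m ν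

variable {p n k}

lemma xq_pow_p (i : Fin n) : xq p n k i ^ p = 0 := by
  rw [xq, ← map_pow, mkQ, Ideal.Quotient.mkₐ_eq_mk, Ideal.Quotient.eq_zero_iff_mem]
  exact Ideal.subset_span ⟨i, rfl⟩

lemma prod_xq_zero {m : Fin n → ℕ} {i : Fin n} (h : p ≤ m i) :
    ∏ ν : Fin n, xq p n k ν ^ m ν = 0 := by
  rw [← Finset.mul_prod_erase Finset.univ _ (Finset.mem_univ i),
    show m i = p + (m i - p) by omega, pow_add, xq_pow_p, zero_mul, zero_mul]

lemma w_zero_of {m : Fin n → ℕ} {i : Fin n} (h : p ≤ m i) : w p n k m = 0 := by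
  rw [w, prod_xq_zero h, mul_zero]

lemma fact_ne_zero [CharP k p] (hp : p.Prime) {d : ℕ} (hd : d < p) :
    ((d.factorial : k)) ≠ 0 := by
  rw [Ne, CharP.cast_eq_zero_iff k p, hp.dvd_factorial]
  omega

lemma w_zero_eq_one : w p n k (fun _ => 0) = 1 := by
  simp [w]


section Der
variable (δ : TP p n k → TP p n k)
  (hadd : ∀ a b, δ (a + b) = δ a + δ b)
  (hmul : ∀ a b, δ (a * b) = δ a * b + a * δ b)
  (halg : ∀ c : k, δ (algebraMap k (TP p n k) c) = 0)

include hmul in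
lemma der_one : δ 1 = 0 := by
  have h := hmul 1 1
  simp only [mul_one, one_mul] at h
  exact (right_eq_add.mp h)

include hadd in
lemma der_zero : δ 0 = 0 := by
  have h := hadd 0 0
  rw [add_zero] at h
  exact (left_eq_add.mp h)

include hmul halg in
lemma der_algMul (c : k) (r : TP p n k) :
    δ (algebraMap k (TP p n k) c * r) = algebraMap k (TP p n k) c * δ r := by
  rw [hmul, halg, zero_mul, zero_add]

lemma smul_eq_algMul (c : k) (r : TP p n k) :
    c • r = algebraMap k (TP p n k) c * r := Algebra.smul_def c r

include hmul halg in
lemma der_smul (c : k) (r : TP p n k) : δ (c • r) = c • δ r := by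
  rw [smul_eq_algMul, smul_eq_algMul, der_algMul δ hmul halg]

include hmul in
lemma der_prod {ι : Type*} [DecidableEq ι] (s : Finset ι) (g : ι → TP p n k) :
    δ (∏ ν ∈ s, g ν) = ∑ i ∈ s, (∏ ν ∈ s.erase i, g ν) * δ (g i) := by
  classical
  induction s using Finset.induction_on with
  | empty => simpa using der_one δ hmul
  | insert a s ha ih =>
    rw [Finset.prod_insert ha, hmul, ih, Finset.mul_sum, Finset.sum_insert ha,
      Finset.erase_insert ha]
    congr 1
    · exact mul_comm _ _
    · apply Finset.sum_congr rfl
      intro i hi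
      have hia : i ≠ a := fun h => ha (h ▸ hi)
      rw [Finset.erase_insert_of_ne (fun h => hia h.symm),
        Finset.prod_insert (fun h => ha (Finset.mem_of_mem_erase h))]
      ring

include hmul in
lemma der_pow (a : TP p n k) (e : ℕ) : δ (a ^ e) = e • (a ^ (e - 1) * δ a) := by
  induction e with
  | zero => simpa using der_one δ hmul
  | succ e ih =>
    cases e with
    | zero => simp [pow_one]
    | succ e =>
      have h1 : (a ^ e * δ a) * a = a ^ (e+1) * δ a := by
        rw [mul_right_comm, ← pow_succ]
      rw [pow_succ a (e+1), hmul, ih]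
      simp only [Nat.add_sub_cancel]
      rw [smul_mul_assoc, h1, succ_nsmul, succ_nsmul, succ_nsmul]


end Der

section Shift
variable {p n : ℕ} {k : Type*} [Field k]

/-- digits of `p^i - 1`: `p-1` below `i`, `0` from `i` on. -/
def eLow (p : ℕ) {n : ℕ} (i : Fin n) : Fin n → ℕ := fun ν => if (ν:ℕ) < (i:ℕ) then p - 1 else 0

lemma prod_pow_add (m m' : Fin n → ℕ) :
    (∏ ν : Fin n, xq p n k ν ^ m ν) * (∏ ν : Fin n, xq p n k ν ^ m' ν)
      = ∏ ν : Fin n, xq p n k ν ^ (m ν + m' ν) := by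
  rw [← Finset.prod_mul_distrib]
  exact Finset.prod_congr rfl fun ν _ => (pow_add _ _ _).symm

lemma prod_update (m : Fin n → ℕ) (i : Fin n) (v : ℕ) :
    (∏ ν ∈ Finset.univ.erase i, xq p n k ν ^ m ν) * xq p n k i ^ v
      = ∏ ν : Fin n, xq p n k ν ^ (Function.update m i v ν) := by
  classical
  have h1 : ∀ ν : Fin n, xq p n k ν ^ (Function.update m i v ν)
      = Function.update (fun ν => xq p n k ν ^ m ν) i (xq p n k i ^ v) ν := by
    intro ν
    by_cases hν : ν = i
    · subst hν; simp
    · simp [Function.update_apply, hν]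
  rw [Finset.prod_congr rfl (fun ν _ => h1 ν), Finset.prod_update_of_mem (Finset.mem_univ i),
    Finset.sdiff_singleton_eq_erase, mul_comm]

variable (δ : TP p n k → TP p n k)
  (hadd : ∀ a b, δ (a + b) = δ a + δ b)
  (hmul : ∀ a b, δ (a * b) = δ a * b + a * δ b)
  (halg : ∀ c : k, δ (algebraMap k (TP p n k) c) = 0)
  (hδx : ∀ i : Fin n, δ (xq p n k i) = w p n k (eLow p i))

include hmul halg hδx in
lemma der_w [CharP k p] (hp : p.Prime) (m : Fin n → ℕ) (hm : ∀ ν, m ν < p) (i₀ : Fin n)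
    (hlow : ∀ ν : Fin n, (ν:ℕ) < (i₀:ℕ) → m ν = 0) (hne : m i₀ ≠ 0) :
    δ (w p n k m) = w p n k (fun ν => if (ν:ℕ) < (i₀:ℕ) then p - 1
      else if ν = i₀ then m i₀ - 1 else m ν) := by
  classical
  set M : Fin n → ℕ := fun ν => if (ν:ℕ) < (i₀:ℕ) then p - 1
      else if ν = i₀ then m i₀ - 1 else m ν with hM
  rw [w, der_algMul δ hmul halg, der_prod δ hmul]
  have hterm : ∀ i : Fin n,
      (∏ ν ∈ Finset.univ.erase i, xq p n k ν ^ m ν) * δ (xq p n k i ^ m i)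
      = (m i : k) • (algebraMap k (TP p n k) (∏ ν : Fin n, ((eLow p i ν).factorial : k)⁻¹)
          * ∏ ν : Fin n, xq p n k ν ^ (Function.update m i (m i - 1) ν + eLow p i ν)) := by
    intro i
    rw [der_pow δ hmul, hδx i, mul_smul_comm, ← Nat.cast_smul_eq_nsmul k]
    congr 1
    rw [w, ← prod_pow_add (Function.update m i (m i - 1)) (eLow p i),
      ← prod_update m i (m i - 1)]
    ring
  rw [Finset.sum_congr rfl (fun i _ => hterm i)]
  rw [Finset.sum_eq_single i₀ ?side1 ?side2]
  case side2 => exact fun h => absurd (Finset.mem_univ i₀) h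
  case side1 =>
    intro i _ hii
    by_cases hlt : (i:ℕ) < (i₀:ℕ)
    · rw [hlow i hlt]
      simp
    · have hgt : (i₀:ℕ) < (i:ℕ) := by
        rcases lt_trichotomy (i:ℕ) (i₀:ℕ) with h | h | h
        · exact absurd h hlt
        · exact absurd (Fin.ext h) hii
        · exact h
      have hbig : p ≤ Function.update m i (m i - 1) i₀ + eLow p i i₀ := by
        rw [Function.update_apply, if_neg (fun h : i₀ = i => hii h.symm)]
        have h1 : m i₀ ≥ 1 := Nat.pos_of_ne_zero hne
        have h2 : eLow p i i₀ = p - 1 := if_pos hgt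
        rw [h2]
        have hp2 : 2 ≤ p := hp.two_le
        omega
      rw [prod_xq_zero hbig, mul_zero, smul_zero]
  -- main term
  have hME : ∀ ν : Fin n, Function.update m i₀ (m i₀ - 1) ν + eLow p i₀ ν = M ν := by
    intro ν
    by_cases hν : (ν:ℕ) < (i₀:ℕ)
    · have hνi : ν ≠ i₀ := fun h => by simp [h] at hν
      have hν' : ν < i₀ := hν
      simp [Function.update_apply, hνi, eLow, hν, hν', hM, hlow ν hν]
    · by_cases hν2 : ν = i₀
      · subst hν2
        have hν' : ¬ ν < ν := lt_irrefl ν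
        simp [eLow, hν, hν', hM]
      · have hν' : ¬ ν < i₀ := hν
        simp [Function.update_apply, hν2, eLow, hν, hν', hM]
  have hprod : (∏ ν : Fin n, xq p n k ν ^ (Function.update m i₀ (m i₀ - 1) ν + eLow p i₀ ν))
      = ∏ ν : Fin n, xq p n k ν ^ M ν := Finset.prod_congr rfl (fun ν _ => by rw [hME ν])
  rw [hprod]
  -- scalar bookkeeping
  have hmi0p : (m i₀ : k) ≠ 0 := by
    rw [Ne, CharP.cast_eq_zero_iff k p]
    intro hdvd
    exact absurd (Nat.le_of_dvd (Nat.pos_of_ne_zero hne) hdvd) (by have := hm i₀; omega)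
  have hfac : (((m i₀).factorial : ℕ) : k) = (m i₀ : k) * (((m i₀ - 1).factorial : ℕ) : k) := by
    rw [← Nat.cast_mul, Nat.mul_factorial_pred hne]
  have stepB : (∏ ν : Fin n, ((Function.update m i₀ (m i₀ - 1) ν).factorial : k)⁻¹)
      = ((m i₀ - 1).factorial : k)⁻¹ * ∏ ν ∈ Finset.univ.erase i₀, ((m ν).factorial : k)⁻¹ := by
    have h1 : ∀ ν : Fin n, ((Function.update m i₀ (m i₀ - 1) ν).factorial : k)⁻¹
        = Function.update (fun ν => ((m ν).factorial : k)⁻¹) i₀ (((m i₀ - 1).factorial : k)⁻¹) ν := by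
      intro ν
      by_cases hν : ν = i₀
      · subst hν; simp
      · simp [Function.update_apply, hν]
    rw [Finset.prod_congr rfl (fun ν _ => h1 ν), Finset.prod_update_of_mem (Finset.mem_univ i₀),
      Finset.sdiff_singleton_eq_erase]
  have stepA : (∏ ν : Fin n, ((M ν).factorial : k)⁻¹)
      = (∏ ν : Fin n, ((Function.update m i₀ (m i₀ - 1) ν).factorial : k)⁻¹)
        * ∏ ν : Fin n, ((eLow p i₀ ν).factorial : k)⁻¹ := by
    rw [← Finset.prod_mul_distrib]
    apply Finset.prod_congr rfl
    intro ν _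
    by_cases hν : (ν:ℕ) < (i₀:ℕ)
    · have hνi : ν ≠ i₀ := fun h => by simp [h] at hν
      have hν' : ν < i₀ := hν
      simp [hM, Function.update_apply, hνi, eLow, hν, hν', hlow ν hν]
    · by_cases hν2 : ν = i₀
      · subst hν2
        have hν' : ¬ ν < ν := lt_irrefl ν
        simp [hM, eLow, hν, hν']
      · have hν' : ¬ ν < i₀ := hν
        simp [hM, Function.update_apply, hν2, eLow, hν, hν']
  have stepC : (∏ ν : Fin n, ((m ν).factorial : k)⁻¹)
      = ((m i₀).factorial : k)⁻¹ * ∏ ν ∈ Finset.univ.erase i₀, ((m ν).factorial : k)⁻¹ :=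
    (Finset.mul_prod_erase _ _ (Finset.mem_univ i₀)).symm
  have hscal : (∏ ν : Fin n, ((m ν).factorial : k)⁻¹) * (m i₀ : k)
        * (∏ ν : Fin n, ((eLow p i₀ ν).factorial : k)⁻¹)
      = ∏ ν : Fin n, ((M ν).factorial : k)⁻¹ := by
    have hD : ((m i₀).factorial : k)⁻¹ * (m i₀ : k) = ((m i₀ - 1).factorial : k)⁻¹ := by
      rw [hfac, mul_inv, mul_comm, ← mul_assoc, mul_inv_cancel₀ hmi0p, one_mul]
    rw [stepA, stepB, stepC, ← hD]
    ring
  rw [smul_eq_algMul, ← mul_assoc, ← mul_assoc, ← map_mul, ← map_mul, hscal, w]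

end Shift

section Span
variable {p n : ℕ} {k : Type*} [Field k]

lemma alg_mk (c : k) :
    algebraMap k (TP p n k) c = Ideal.Quotient.mk _ (C c) := by
  rw [← MvPolynomial.algebraMap_eq, ← Ideal.Quotient.mkₐ_eq_mk k]
  exact ((Ideal.Quotient.mkₐ k _).commutes c).symm

lemma mk_monomial (m : Fin n →₀ ℕ) (c : k) :
    Ideal.Quotient.mk _ (monomial m c)
      = algebraMap k (TP p n k) c * ∏ ν : Fin n, xq p n k ν ^ m ν := by
  rw [monomial_eq, map_mul, Finsupp.prod_pow, map_prod, alg_mk]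
  exact congrArg _ (Finset.prod_congr rfl fun ν _ => by rw [map_pow]; rfl)

/-- every element is a `k`-combination of the `w (dig j)`, `j < p^n`. -/
lemma rep [CharP k p] (hp : p.Prime) (r : TP p n k) :
    ∃ c : ℕ → k, r = ∑ j ∈ Finset.range (p ^ n),
      c j • w p n k (fun ν => j / p ^ (ν : ℕ) % p) := by
  classical
  obtain ⟨f, rfl⟩ := Ideal.Quotient.mk_surjective r
  rw [MvPolynomial.as_sum f, map_sum]
  apply Finset.sum_induction _ (fun r => ∃ c : ℕ → k, r = ∑ j ∈ Finset.range (p ^ n),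
      c j • w p n k (fun ν => j / p ^ (ν : ℕ) % p))
  · rintro a b ⟨ca, ha⟩ ⟨cb, hb⟩
    refine ⟨fun j => ca j + cb j, ?_⟩
    rw [ha, hb, ← Finset.sum_add_distrib]
    exact Finset.sum_congr rfl fun j _ => (add_smul _ _ _).symm
  · exact ⟨fun _ => 0, by simp⟩
  intro m _
  generalize MvPolynomial.coeff m f = c
  rw [mk_monomial]
  by_cases hbig : ∃ i, p ≤ m i
  · obtain ⟨i, hi⟩ := hbig
    rw [prod_xq_zero hi, mul_zero]
    exact ⟨fun _ => 0, by simp⟩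
  push_neg at hbig
  set g : ℕ → ℕ := fun ν => if h : ν < n then m ⟨ν, h⟩ else 0 with hg
  have hglt : ∀ ν, g ν < p := by
    intro ν
    simp only [hg]
    by_cases h : ν < n
    · rw [dif_pos h]; exact hbig _
    · rw [dif_neg h]; exact hp.pos
  set j : ℕ := ∑ ν ∈ Finset.range n, g ν * p ^ ν with hj
  have hjlt : j < p ^ n := sumDig_lt hp.two_le n g hglt
  have hdig : ∀ ν : Fin n, j / p ^ (ν : ℕ) % p = m ν := by
    intro ν
    rw [hj, dig_sum hp.two_le n g hglt, if_pos ν.isLt]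
    simp only [hg]
    rw [dif_pos ν.isLt]
  have hwm : w p n k (fun ν => j / p ^ (ν : ℕ) % p) = w p n k (fun ν => m ν) :=
    congrArg (w p n k) (funext fun ν => hdig ν)
  refine ⟨fun j' => if j' = j then c * ∏ ν : Fin n, ((m ν).factorial : k) else 0, ?_⟩
  have hsum : ∑ j' ∈ Finset.range (p ^ n),
      (if j' = j then c * ∏ ν : Fin n, ((m ν).factorial : k) else 0)
        • w p n k (fun ν => j' / p ^ (ν : ℕ) % p)
      = (c * ∏ ν : Fin n, ((m ν).factorial : k)) • w p n k (fun ν => j / p ^ (ν : ℕ) % p) := by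
    simp only [ite_smul, zero_smul]
    rw [Finset.sum_ite_eq' (Finset.range (p ^ n)) j
      (fun j' => (c * ∏ ν : Fin n, ((m ν).factorial : k)) • w p n k (fun ν => j' / p ^ (ν : ℕ) % p)),
      if_pos (Finset.mem_range.2 hjlt)]
  rw [hsum, hwm, smul_eq_algMul, w, ← mul_assoc, ← map_mul]
  congr 2
  rw [mul_assoc, ← Finset.prod_mul_distrib]
  have : ∀ ν : Fin n, ((m ν).factorial : k) * ((m ν).factorial : k)⁻¹ = 1 := fun ν =>
    mul_inv_cancel₀ (fact_ne_zero hp (hbig ν))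
  rw [Finset.prod_congr rfl (fun ν _ => this ν), Finset.prod_const_one, mul_one]

end Span

section Construct
variable {p n : ℕ} {k : Type*} [Field k]

def Bp (p : ℕ) {n : ℕ} (k : Type*) [Field k] (i : Fin n) : MvPolynomial (Fin n) k :=
  C (∏ ν : Fin n, ((eLow p i ν).factorial : k)⁻¹) * ∏ ν : Fin n, X ν ^ (eLow p i ν)

lemma mk_Bp (i : Fin n) :
    Ideal.Quotient.mk _ (Bp p k i) = w p n k (eLow p i) := by
  rw [Bp, map_mul, ← alg_mk, w]
  congr 1
  rw [map_prod]
  exact Finset.prod_congr rfl fun ν _ => by rw [map_pow]; rfl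

def Dfun (p : ℕ) {n : ℕ} {k : Type*} [Field k] (f : MvPolynomial (Fin n) k) :
    MvPolynomial (Fin n) k :=
  ∑ i : Fin n, Bp p k i * pderiv i f

lemma Dfun_add (a b : MvPolynomial (Fin n) k) : Dfun p (a + b) = Dfun p a + Dfun p b := by
  simp only [Dfun, map_add, mul_add]
  exact Finset.sum_add_distrib

lemma Dfun_sub (a b : MvPolynomial (Fin n) k) : Dfun p (a - b) = Dfun p a - Dfun p b := by
  simp only [Dfun, map_sub, mul_sub]
  rw [Finset.sum_sub_distrib]

lemma Dfun_mul (a b : MvPolynomial (Fin n) k) :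
    Dfun p (a * b) = Dfun p a * b + a * Dfun p b := by
  simp only [Dfun, pderiv_mul, mul_add, Finset.sum_add_distrib, Finset.sum_mul,
    Finset.mul_sum]
  congr 1
  · exact Finset.sum_congr rfl fun i _ => by ring
  · exact Finset.sum_congr rfl fun i _ => by ring

lemma Dfun_C (c : k) : Dfun p (C c : MvPolynomial (Fin n) k) = 0 := by
  simp [Dfun]

lemma Dfun_X (i : Fin n) : Dfun p (X i : MvPolynomial (Fin n) k) = Bp p k i := by
  rw [Dfun, Finset.sum_eq_single i]
  · rw [pderiv_X, Pi.single_eq_same, mul_one]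
  · intro i' _ hii
    rw [pderiv_X, Pi.single_eq_of_ne (fun h => hii h.symm), mul_zero]
  · exact fun h => absurd (Finset.mem_univ i) h

lemma Dfun_Xp [CharP k p] (i : Fin n) :
    Dfun p ((X i : MvPolynomial (Fin n) k) ^ p) = 0 := by
  rw [Dfun]
  apply Finset.sum_eq_zero
  intro i' _
  have h0 : ((pderiv i') ((X i : MvPolynomial (Fin n) k) ^ p)) = 0 := by
    rw [Derivation.leibniz_pow, ← Nat.cast_smul_eq_nsmul (MvPolynomial (Fin n) k),
      CharP.cast_eq_zero, zero_smul]
  rw [h0, mul_zero]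

lemma Dfun_mem [CharP k p] {f : MvPolynomial (Fin n) k}
    (hf : f ∈ Ideal.span (Set.range fun i : Fin n => (X i : MvPolynomial (Fin n) k) ^ p)) :
    Dfun p f ∈ Ideal.span (Set.range fun i : Fin n => (X i : MvPolynomial (Fin n) k) ^ p) := by
  induction hf using Submodule.span_induction with
  | mem g hg =>
    obtain ⟨i, rfl⟩ := hg
    rw [Dfun_Xp]
    exact Submodule.zero_mem _
  | zero =>
    have : Dfun p (0 : MvPolynomial (Fin n) k) = 0 := by simp [Dfun]
    rw [this]; exact Submodule.zero_mem _
  | add a b ha hb iha ihb =>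
    rw [Dfun_add]
    exact Submodule.add_mem _ iha ihb
  | smul a g hg ihg =>
    rw [smul_eq_mul, Dfun_mul]
    exact Submodule.add_mem _ (Ideal.mul_mem_left _ _ hg) (Ideal.mul_mem_left _ _ ihg)

def δ0 (p n : ℕ) (k : Type*) [Field k] : TP p n k → TP p n k :=
  fun r => Ideal.Quotient.mk _ (Dfun p (Function.surjInv Ideal.Quotient.mk_surjective r))

lemma δ0_mk [CharP k p] (f : MvPolynomial (Fin n) k) :
    δ0 p n k (Ideal.Quotient.mk _ f) = Ideal.Quotient.mk _ (Dfun p f) := by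
  rw [δ0, Ideal.Quotient.eq, ← Dfun_sub]
  apply Dfun_mem
  rw [← Ideal.Quotient.eq]
  exact Function.surjInv_eq Ideal.Quotient.mk_surjective _

lemma δ0_isDer [CharP k p] :
    (∀ a b : TP p n k, δ0 p n k (a + b) = δ0 p n k a + δ0 p n k b) ∧
    (∀ a b : TP p n k, δ0 p n k (a * b) = δ0 p n k a * b + a * δ0 p n k b) := by
  constructor
  · intro a b
    obtain ⟨f, rfl⟩ := Ideal.Quotient.mk_surjective a
    obtain ⟨g, rfl⟩ := Ideal.Quotient.mk_surjective b
    rw [← map_add, δ0_mk, δ0_mk, δ0_mk, Dfun_add, map_add]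
  · intro a b
    obtain ⟨f, rfl⟩ := Ideal.Quotient.mk_surjective a
    obtain ⟨g, rfl⟩ := Ideal.Quotient.mk_surjective b
    rw [← map_mul, δ0_mk, δ0_mk, δ0_mk, Dfun_mul, map_add, map_mul, map_mul]

lemma δ0_alg [CharP k p] (c : k) : δ0 p n k (algebraMap k (TP p n k) c) = 0 := by
  rw [alg_mk, δ0_mk, Dfun_C, map_zero]

lemma δ0_x [CharP k p] (i : Fin n) : δ0 p n k (xq p n k i) = w p n k (eLow p i) := by
  rw [show xq p n k i = Ideal.Quotient.mk _ (X i) from rfl, δ0_mk, Dfun_X, mk_Bp]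

end Construct

section Iterates
variable {p n : ℕ} {k : Type*} [Field k]
variable (δ : TP p n k → TP p n k)
  (hadd : ∀ a b, δ (a + b) = δ a + δ b)
  (hmul : ∀ a b, δ (a * b) = δ a * b + a * δ b)
  (halg : ∀ c : k, δ (algebraMap k (TP p n k) c) = 0)
  (hδx : ∀ i : Fin n, δ (xq p n k i) = w p n k (eLow p i))

include hmul halg hδx in
lemma der_w_dig [CharP k p] (hp : p.Prime) {j : ℕ} (hj1 : 1 ≤ j) (hjn : j < p ^ n) :
    δ (w p n k (fun ν => j / p ^ (ν : ℕ) % p))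
      = w p n k (fun ν => (j - 1) / p ^ (ν : ℕ) % p) := by
  classical
  have hp2 := hp.two_le
  set i : ℕ := j.factorization p with hi
  set q : ℕ := j / p ^ i with hq
  have hjq : p ^ i * q = j := Nat.ordProj_mul_ordCompl_eq_self j p
  have hqnd : ¬ p ∣ q := Nat.not_dvd_ordCompl hp (by omega)
  have hq1 : 1 ≤ q := by
    rcases Nat.eq_zero_or_pos q with h | h
    · exact absurd (h ▸ dvd_zero p) hqnd
    · exact h
  have hin : i < n := by
    have h1 : p ^ i ≤ j := by
      calc p ^ i ≤ p ^ i * q := Nat.le_mul_of_pos_right _ hq1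
        _ = j := hjq
    have h2 : p ^ i < p ^ n := lt_of_le_of_lt h1 hjn
    exact (pow_lt_pow_iff_right₀ (by omega)).1 h2
  set i₀ : Fin n := ⟨i, hin⟩ with hi₀
  have hqmod : q % p ≠ 0 := fun h => hqnd (Nat.dvd_of_mod_eq_zero h)
  have hmlt : ∀ ν : Fin n, j / p ^ (ν : ℕ) % p < p := fun ν => Nat.mod_lt _ (by omega)
  have hlow : ∀ ν : Fin n, (ν : ℕ) < (i₀ : ℕ) → j / p ^ (ν : ℕ) % p = 0 := by
    intro ν hν
    rw [← hjq]
    exact dig_lo hp2 hν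
  have hne : j / p ^ (i₀ : ℕ) % p ≠ 0 := by
    rw [← hjq]
    show p ^ i * q / p ^ i % p ≠ 0
    rw [dig_at hp2]
    exact hqmod
  rw [der_w δ hmul halg hδx hp _ hmlt i₀ hlow hne]
  congr 1
  funext ν
  by_cases hν : (ν : ℕ) < (i₀ : ℕ)
  · rw [if_pos hν, ← hjq]
    exact (dig_pred_lo hp2 hq1 hν).symm
  · by_cases hν2 : ν = i₀
    · subst hν2
      rw [if_neg hν, if_pos rfl, ← hjq]
      have h2 : (p ^ i * q - 1) / p ^ (i₀ : ℕ) % p = p ^ i * q / p ^ (i₀ : ℕ) % p - 1 := by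
        show (p ^ i * q - 1) / p ^ i % p = p ^ i * q / p ^ i % p - 1
        rw [dig_pred_at hp2 hqnd, dig_at hp2]
      exact h2.symm
    · have hgt : (i₀ : ℕ) < (ν : ℕ) := by
        rcases lt_trichotomy ((ν:ℕ)) ((i₀:ℕ)) with h | h | h
        · exact absurd h hν
        · exact absurd (Fin.ext h) hν2
        · exact h
      rw [if_neg hν, if_neg hν2, ← hjq, dig_pred_hi hp2 hqnd hgt]

include hadd in
lemma iter_add (t : ℕ) (a b : TP p n k) : δ^[t] (a + b) = δ^[t] a + δ^[t] b := by
  induction t generalizing a b with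
  | zero => simp
  | succ t ih =>
    rw [Function.iterate_succ_apply, hadd, ih]
    rw [Function.iterate_succ_apply, Function.iterate_succ_apply]

include hadd in
lemma iter_zero (t : ℕ) : δ^[t] (0 : TP p n k) = 0 := by
  induction t with
  | zero => simp
  | succ t ih => rw [Function.iterate_succ_apply, der_zero δ hadd, ih]

include hadd hmul halg in
lemma iter_smul (t : ℕ) (c : k) (r : TP p n k) : δ^[t] (c • r) = c • δ^[t] r := by
  induction t generalizing r with
  | zero => simp
  | succ t ih =>
    rw [Function.iterate_succ_apply, der_smul δ hmul halg, ih,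
      Function.iterate_succ_apply]

include hadd in
lemma iter_sum (t : ℕ) {ι : Type*} (s : Finset ι) (g : ι → TP p n k) :
    δ^[t] (∑ i ∈ s, g i) = ∑ i ∈ s, δ^[t] (g i) := by
  classical
  induction s using Finset.induction_on with
  | empty => simpa using iter_zero δ hadd t
  | insert a s ha ih =>
    rw [Finset.sum_insert ha, iter_add δ hadd, ih, Finset.sum_insert ha]

include hadd hmul halg hδx in
lemma iter_w_dig [CharP k p] (hp : p.Prime) (t : ℕ) {j : ℕ} (htj : t ≤ j) (hjn : j < p ^ n) :
    δ^[t] (w p n k (fun ν => j / p ^ (ν : ℕ) % p))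
      = w p n k (fun ν => (j - t) / p ^ (ν : ℕ) % p) := by
  induction t generalizing j with
  | zero => simp
  | succ t ih =>
    rw [Function.iterate_succ_apply, der_w_dig δ hmul halg hδx hp (by omega) hjn,
      ih (j := j - 1) (by omega) (by omega)]
    have h : j - 1 - t = j - (t + 1) := by omega
    rw [h]

lemma w_dig_zero : w p n k (fun ν => 0 / p ^ (ν : ℕ) % p) = 1 := by
  have h : (fun ν : Fin n => 0 / p ^ (ν : ℕ) % p) = fun _ => 0 := by
    funext ν; simp
  rw [h, w_zero_eq_one]

include hadd hmul halg hδx in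
lemma iter_w_dig_zero [CharP k p] (hp : p.Prime) {t j : ℕ} (htj : j < t) (hjn : j < p ^ n) :
    δ^[t] (w p n k (fun ν => j / p ^ (ν : ℕ) % p)) = 0 := by
  have hsplit : t = (t - j - 1) + (1 + j) := by omega
  rw [hsplit, Function.iterate_add_apply, Function.iterate_add_apply,
    iter_w_dig δ hadd hmul halg hδx hp j le_rfl hjn, Nat.sub_self]
  rw [w_dig_zero, Function.iterate_one, der_one δ hmul, iter_zero δ hadd]


lemma w_single {p n : ℕ} {k : Type*} [Field k] (i : Fin n) :
    w p n k (fun ν => if ν = i then 1 else 0) = xq p n k i := by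
  classical
  rw [w]
  have h1 : (∏ ν : Fin n, (((if ν = i then 1 else 0) : ℕ).factorial : k)⁻¹) = 1 := by
    apply Finset.prod_eq_one
    intro ν _
    split <;> simp
  rw [h1, map_one, one_mul]
  have h2 : ∀ ν : Fin n, xq p n k ν ^ (if ν = i then 1 else 0)
      = if ν = i then xq p n k ν else 1 := by
    intro ν; split <;> simp
  rw [Finset.prod_congr rfl fun ν _ => h2 ν, Finset.prod_ite_eq' Finset.univ i,
    if_pos (Finset.mem_univ i)]

end Iterates
end Stmt17Aux



set_option maxHeartbeats 1000000 in
theorem stmt17 (p : ℕ) (hp : p.Prime) (k : Type*) [Field k] [CharP k p]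
    (n : ℕ) (hn : 1 ≤ n)
    -- `x_i` is the image of `X_i`
    (x : Fin n → TruncPoly p n k)
    (hx : ∀ i, x i = Ideal.Quotient.mk _ (MvPolynomial.X i))
    -- `x^{[j]} := Π_ν x_ν^{j_ν}/j_ν!` for the `p`-adic digits `j_ν` of `j`
    (xb : ℕ → TruncPoly p n k)
    (hxb : ∀ j : ℕ, j < p ^ n → xb j = ∏ ν : Fin n,
      algebraMap k (TruncPoly p n k) (((j / p ^ (ν : ℕ) % p).factorial : k)⁻¹) *
        x ν ^ (j / p ^ (ν : ℕ) % p)) :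
    -- there is a (unique) `k`-derivation `δ = Σ_i x^{[p^i−1]} ∂/∂x_i`, i.e. with
    -- `δ(x_i) = x^{[p^i−1]}`, and every such `δ` has the stated properties
    (∃ δ : TruncPoly p n k → TruncPoly p n k, IsDerivation δ ∧
      (∀ c : k, δ (algebraMap k (TruncPoly p n k) c) = 0) ∧
      (∀ i : Fin n, δ (x i) = xb (p ^ (i : ℕ) - 1))) ∧
    (∀ δ : TruncPoly p n k → TruncPoly p n k, IsDerivation δ →
      (∀ c : k, δ (algebraMap k (TruncPoly p n k) c) = 0) →
      (∀ i : Fin n, δ (x i) = xb (p ^ (i : ℕ) - 1)) →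
      -- `δ` is a simple derivation
      (∀ I : Ideal (TruncPoly p n k), (∀ a ∈ I, δ a ∈ I) → I = ⊥ ∨ I = ⊤) ∧
      -- `δ` is nilpotent with `δ^{p^n} = 0`
      (∀ r : TruncPoly p n k, δ^[p ^ n] r = 0) ∧
      -- `δ^{p^i}(x^{[p^i]}) = 1`
      (∀ i : Fin n, δ^[p ^ (i : ℕ)] (xb (p ^ (i : ℕ))) = 1) ∧
      -- in particular `δ ∈ nsder(R)`, where the maximal ideal is `(x_0,…,x_{n−1})`
      Nsder p (Ideal.span (Set.range x)) δ) := by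
  classical
  have hp2 := hp.two_le
  have hxq : ∀ i, x i = xq p n k i := fun i => hx i
  have hxbw : ∀ j, j < p ^ n → xb j = w p n k (fun ν => j / p ^ (ν : ℕ) % p) := by
    intro j hj
    rw [hxb j hj, Finset.prod_mul_distrib, ← map_prod, w]
    congr 1
    exact Finset.prod_congr rfl fun ν _ => by rw [hxq]
  have hpowlt : ∀ i : Fin n, p ^ (i : ℕ) < p ^ n := fun i =>
    Nat.pow_lt_pow_right (by omega) i.isLt
  have hdigLow : ∀ i : Fin n,
      (fun ν : Fin n => (p ^ (i : ℕ) - 1) / p ^ (ν : ℕ) % p) = eLow p i := by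
    intro i
    funext ν
    by_cases hν : (ν : ℕ) < (i : ℕ)
    · rw [eLow]
      rw [if_pos hν, show p ^ (i:ℕ) = p ^ (i:ℕ) * 1 by ring]
      exact dig_pred_lo hp2 le_rfl hν
    · rw [eLow, if_neg hν]
      have h1 : p ^ (i : ℕ) - 1 < p ^ (ν : ℕ) := by
        have := Nat.pow_le_pow_right (show 1 ≤ p by omega) (show (i:ℕ) ≤ (ν:ℕ) by omega)
        have hpos : 0 < p ^ (i : ℕ) := pow_pos (by omega) _
        omega
      rw [Nat.div_eq_of_lt h1, Nat.zero_mod]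
  have hxblow : ∀ i : Fin n, xb (p ^ (i : ℕ) - 1) = w p n k (eLow p i) := by
    intro i
    rw [hxbw _ (by have := hpowlt i; omega), hdigLow i]
  have hdigPow : ∀ i : Fin n,
      (fun ν : Fin n => p ^ (i : ℕ) / p ^ (ν : ℕ) % p) = fun ν => if ν = i then 1 else 0 := by
    intro i
    funext ν
    by_cases hν : (ν : ℕ) < (i : ℕ)
    · rw [if_neg (fun h => by subst h; omega)]
      rw [show p ^ (i:ℕ) = p ^ (i:ℕ) * 1 by ring]
      exact dig_lo hp2 hν
    · by_cases hν2 : ν = i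
      · subst hν2
        rw [if_pos rfl, Nat.div_self (pow_pos (by omega) _), Nat.mod_eq_of_lt (by omega)]
      · have hgt : (i : ℕ) < (ν : ℕ) := by
          rcases lt_trichotomy ((ν:ℕ)) ((i:ℕ)) with h | h | h
          · exact absurd h hν
          · exact absurd (Fin.ext h) hν2
          · exact h
        rw [if_neg hν2]
        have h1 : p ^ (i : ℕ) < p ^ (ν : ℕ) := Nat.pow_lt_pow_right (by omega) hgt
        rw [Nat.div_eq_of_lt h1, Nat.zero_mod]
  have hxbpow : ∀ i : Fin n, xb (p ^ (i : ℕ)) = xq p n k i := by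
    intro i
    rw [hxbw _ (hpowlt i), hdigPow i, w_single i]
  constructor
  · -- existence
    refine ⟨δ0 p n k, ⟨(δ0_isDer (p := p) (n := n) (k := k)).1,
      (δ0_isDer (p := p) (n := n) (k := k)).2⟩, fun c => δ0_alg c, ?_⟩
    intro i
    rw [hxq i, δ0_x i, ← hxblow i]
  · intro δ hder halgc hδxb
    obtain ⟨hadd, hmul⟩ := hder
    have hδx : ∀ i : Fin n, δ (xq p n k i) = w p n k (eLow p i) := by
      intro i
      rw [← hxq i, hδxb i, hxblow i]
    -- iterate facts
    have hstab : ∀ (I : Ideal (TruncPoly p n k)), (∀ a ∈ I, δ a ∈ I) →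
        ∀ (t : ℕ) (a : TruncPoly p n k), a ∈ I → δ^[t] a ∈ I := by
      intro I hI t
      induction t with
      | zero => intro a ha; simpa using ha
      | succ t ih =>
        intro a ha
        rw [Function.iterate_succ_apply']
        exact hI _ (ih a ha)
    -- simplicity
    have hsimple : ∀ I : Ideal (TruncPoly p n k), (∀ a ∈ I, δ a ∈ I) → I = ⊥ ∨ I = ⊤ := by
      intro I hI
      by_cases hbot : I = ⊥
      · exact Or.inl hbot
      right
      obtain ⟨r, hrI, hr0⟩ := Submodule.exists_mem_ne_zero_of_ne_bot hbot
      obtain ⟨c, hc⟩ := rep hp r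
      set T := (Finset.range (p ^ n)).filter (fun j => c j ≠ 0) with hT
      have hTne : T.Nonempty := by
        rw [Finset.nonempty_iff_ne_empty]
        intro hTe
        apply hr0
        rw [hc]
        apply Finset.sum_eq_zero
        intro j hj
        have : ¬ (c j ≠ 0) := by
          intro hcj
          have : j ∈ T := Finset.mem_filter.2 ⟨hj, hcj⟩
          rw [hTe] at this
          exact absurd this (Finset.notMem_empty j)
        push_neg at this
        rw [this, zero_smul]
      set J := T.max' hTne with hJ
      have hJT : J ∈ T := T.max'_mem hTne
      have hJrange : J < p ^ n := Finset.mem_range.1 (Finset.mem_filter.1 hJT).1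
      have hcJ : c J ≠ 0 := (Finset.mem_filter.1 hJT).2
      have hcompute : δ^[J] r = algebraMap k (TruncPoly p n k) (c J) := by
        rw [hc, iter_sum δ hadd]
        have hterm : ∀ j ∈ Finset.range (p ^ n),
            δ^[J] (c j • w p n k (fun ν => j / p ^ (ν : ℕ) % p))
            = c j • δ^[J] (w p n k (fun ν => j / p ^ (ν : ℕ) % p)) := fun j _ =>
          iter_smul δ hadd hmul halgc J (c j) _
        rw [Finset.sum_congr rfl hterm, Finset.sum_eq_single J ?h1 ?h2]
        · rw [iter_w_dig δ hadd hmul halgc hδx hp J le_rfl hJrange, Nat.sub_self,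
            w_dig_zero, smul_eq_algMul, mul_one]
        case h1 =>
          intro j hj hjJ
          by_cases hlt : j < J
          · rw [iter_w_dig_zero δ hadd hmul halgc hδx hp hlt (Finset.mem_range.1 hj), smul_zero]
          · have hjT : j ∉ T := by
              intro hjT
              exact hjJ (le_antisymm (T.le_max' j hjT) (by omega))
            have : c j = 0 := by
              by_contra hcj
              exact hjT (Finset.mem_filter.2 ⟨hj, hcj⟩)
            rw [this, zero_smul]
        case h2 =>
          intro hJr
          exact absurd (Finset.mem_range.2 hJrange) hJr
      have hmem : algebraMap k (TruncPoly p n k) (c J) ∈ I := by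
        rw [← hcompute]
        exact hstab I hI J r hrI
      exact Ideal.eq_top_of_isUnit_mem I hmem
        (IsUnit.map (algebraMap k (TruncPoly p n k)) (isUnit_iff_ne_zero.2 hcJ))
    -- nilpotency
    have hnilp : ∀ r : TruncPoly p n k, δ^[p ^ n] r = 0 := by
      intro r
      obtain ⟨c, hc⟩ := rep hp r
      rw [hc, iter_sum δ hadd]
      apply Finset.sum_eq_zero
      intro j hj
      rw [iter_smul δ hadd hmul halgc,
        iter_w_dig_zero δ hadd hmul halgc hδx hp (Finset.mem_range.1 hj) (Finset.mem_range.1 hj),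
        smul_zero]
    -- δ^[p^i] (xb (p^i)) = 1
    have hone : ∀ i : Fin n, δ^[p ^ (i : ℕ)] (xb (p ^ (i : ℕ))) = 1 := by
      intro i
      rw [hxbw _ (hpowlt i),
        iter_w_dig δ hadd hmul halgc hδx hp _ le_rfl (hpowlt i), Nat.sub_self, w_dig_zero]
    refine ⟨hsimple, hnilp, hone, ⟨⟨hadd, hmul⟩, ⟨p ^ n, hnilp⟩, hsimple, ?_⟩⟩
    intro i hi
    by_cases hin : i < n
    · refine ⟨xb (p ^ i), ?_, ?_⟩
      · rw [show xb (p ^ i) = xb (p ^ ((⟨i, hin⟩ : Fin n) : ℕ)) from rfl, hxbpow ⟨i, hin⟩,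
          ← hxq ⟨i, hin⟩]
        exact Ideal.subset_span ⟨⟨i, hin⟩, rfl⟩
      · exact hone ⟨i, hin⟩
    · exfalso
      obtain ⟨r, hr⟩ := hi
      apply hr
      have hsplit : p ^ i = (p ^ i - p ^ n) + p ^ n := by
        have : p ^ n ≤ p ^ i := Nat.pow_le_pow_right (by omega) (by omega)
        omega
      rw [hsplit, Function.iterate_add_apply, hnilp r, iter_zero δ hadd]
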